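/- arXiv:2202.07527 — 2 statements merged into one kernel-verified Lean document; each statement's English description precedes it below -/
import Mathlib

section
/- Let μ be a finite absolutely continuous Borel measure on ℝ^n with bounded first moment. Then for every x ≠ b_μ(ℝ^n) in the interior of the convex hull of supp(μ), there exists a halfspace H ⊆ ℝ^n with b_μ(H) = x and μ(H) = sup{μ(A) : A Borel, b_μ(A) = x}. -/
open MeasureTheory Set RealInnerProductSpace

/-- The support of a measure: points all of whose open neighbourhoods have positive
measure. -/
def measSupport {E : Type*} [TopologicalSpace E] [MeasurableSpace E]
    (μ : MeasureTheory.Measure E) : Set E :=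
  {x | ∀ U : Set E, IsOpen U → x ∈ U → 0 < μ U}

/-- A hyperplane has Lebesgue measure zero. -/
theorem aux_hyperplane {n : ℕ} (v : EuclideanSpace ℝ (Fin n)) (hv : v ≠ 0) (c : ℝ) :
    volume {y : EuclideanSpace ℝ (Fin n) | ⟪v, y⟫ = c} = 0 := by
  set K := LinearMap.ker (innerSL ℝ v : EuclideanSpace ℝ (Fin n) →L[ℝ] ℝ).toLinearMap with hK
  have hKne : K ≠ ⊤ := by
    intro h
    have hm : v ∈ K := by rw [h]; trivial
    have : ⟪v, v⟫ = 0 := by simpa [hK, LinearMap.mem_ker] using hm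
    exact hv (by rwa [inner_self_eq_zero] at this)
  have hvol : volume (K : Set (EuclideanSpace ℝ (Fin n))) = 0 :=
    Measure.addHaar_submodule volume K hKne
  set y₀ : EuclideanSpace ℝ (Fin n) := (c / ‖v‖^2) • v with hy₀
  have hvn : ‖v‖^2 ≠ 0 := pow_ne_zero 2 (norm_ne_zero_iff.mpr hv)
  have h0 : ⟪v, y₀⟫ = c := by
    rw [hy₀, real_inner_smul_right, real_inner_self_eq_norm_sq]
    field_simp
  have hset : {y : EuclideanSpace ℝ (Fin n) | ⟪v, y⟫ = c}
      = (fun y => y + (-y₀)) ⁻¹' (K : Set _) := by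
    ext y
    have : (y + -y₀ ∈ K) ↔ ⟪v, y + -y₀⟫ = 0 := by
      simp [hK, LinearMap.mem_ker]
    simp only [mem_setOf_eq, mem_preimage, SetLike.mem_coe, this, inner_add_right,
      inner_neg_right, h0]
    constructor
    · intro h; rw [h]; ring
    · intro h; linarith
  rw [hset, measure_preimage_add_right]
  exact hvol

/-- Differentiation under the integral sign for the function
`v ↦ ∫ max (1 + ⟪v, y - x⟫) 0 dμ`, along the line `t ↦ v + t • w`, provided the
"boundary hyperplane" is `μ`-null. -/
theorem aux_deriv {n : ℕ} (μ : Measure (EuclideanSpace ℝ (Fin n))) [IsFiniteMeasure μ]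
    (x v w : EuclideanSpace ℝ (Fin n))
    (hIz : Integrable (fun y => y - x) μ)
    (hnull : μ {y | 1 + ⟪v, y - x⟫ = 0} = 0) :
    HasDerivAt (fun t : ℝ => ∫ y, max (1 + ⟪v + t • w, y - x⟫) 0 ∂μ)
      (∫ y in {y | 0 ≤ 1 + ⟪v, y - x⟫}, ⟪w, y - x⟫ ∂μ) 0 := by
  have hIv : ∀ u : EuclideanSpace ℝ (Fin n), Integrable (fun y => ⟪u, y - x⟫) μ :=
    fun u => hIz.const_inner u
  have hIn : Integrable (fun y => ‖y - x‖) μ := hIz.norm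
  have hcont : ∀ u : EuclideanSpace ℝ (Fin n),
      Continuous fun y : EuclideanSpace ℝ (Fin n) => ⟪u, y - x⟫ :=
    fun u => continuous_const.inner (continuous_id.sub continuous_const)
  have hHmeas : MeasurableSet {y : EuclideanSpace ℝ (Fin n) | 0 ≤ 1 + ⟪v, y - x⟫} :=
    measurableSet_le measurable_const (continuous_const.add (hcont v)).measurable
  set F : ℝ → EuclideanSpace ℝ (Fin n) → ℝ :=
    fun t y => max (1 + ⟪v, y - x⟫ + t * ⟪w, y - x⟫) 0 with hFdef
  set F' : EuclideanSpace ℝ (Fin n) → ℝ :=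
    Set.indicator {y | 0 ≤ 1 + ⟪v, y - x⟫} (fun y => ⟪w, y - x⟫) with hF'def
  have key := hasDerivAt_integral_of_dominated_loc_of_lip (μ := μ) (F := F) (F' := F')
      (x₀ := (0:ℝ)) (bound := fun y => ‖w‖ * ‖y - x‖) (s := Metric.ball 0 1) (Metric.ball_mem_nhds _ one_pos)
      ?_ ?_ ?_ ?_ ?_ ?_
  · have h1 : (fun t : ℝ => ∫ y, F t y ∂μ)
        = fun t : ℝ => ∫ y, max (1 + ⟪v + t • w, y - x⟫) 0 ∂μ := by
      funext t
      congr 1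
      funext y
      rw [hFdef]
      simp only [inner_add_left, real_inner_smul_left]
      ring_nf
    have h2 : ∫ y, F' y ∂μ = ∫ y in {y | 0 ≤ 1 + ⟪v, y - x⟫}, ⟪w, y - x⟫ ∂μ := by
      rw [hF'def, integral_indicator hHmeas]
    rw [← h1, ← h2]
    exact key.2
  · refine Filter.Eventually.of_forall fun t => Continuous.aestronglyMeasurable ?_
    exact ((continuous_const.add (hcont v)).add (continuous_const.mul (hcont w))).max
      continuous_const
  · have h := ((integrable_const (1:ℝ)).add (hIv v)).pos_part
    have he : F 0 = fun y => max ((1:ℝ) + ⟪v, y - x⟫) 0 := by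
      funext y
      rw [hFdef]
      norm_num
    rw [he]
    exact h
  · exact ((hcont w).aestronglyMeasurable).indicator hHmeas
  · refine Filter.Eventually.of_forall fun y => LipschitzWith.lipschitzOnWith ?_
    refine LipschitzWith.of_dist_le_mul fun s t => ?_
    rw [Real.dist_eq, Real.dist_eq, Real.coe_nnabs]
    have h1 : |F s y - F t y| ≤ |(1 + ⟪v, y - x⟫ + s * ⟪w, y - x⟫)
        - (1 + ⟪v, y - x⟫ + t * ⟪w, y - x⟫)| := by
      rw [hFdef]
      exact abs_max_sub_max_le_abs _ _ 0
    have h2 : (1 + ⟪v, y - x⟫ + s * ⟪w, y - x⟫) - (1 + ⟪v, y - x⟫ + t * ⟪w, y - x⟫)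
        = (s - t) * ⟪w, y - x⟫ := by ring
    rw [h2] at h1
    refine h1.trans ?_
    rw [abs_mul, abs_of_nonneg (by positivity : (0:ℝ) ≤ ‖w‖ * ‖y - x‖)]
    calc |s - t| * |⟪w, y - x⟫| ≤ |s - t| * (‖w‖ * ‖y - x‖) := by
          gcongr
          exact (abs_real_inner_le_norm w (y - x))
      _ = ‖w‖ * ‖y - x‖ * |s - t| := by ring
  · exact hIn.const_mul ‖w‖
  · have hae : ∀ᵐ y ∂μ, y ∉ {y | 1 + ⟪v, y - x⟫ = 0} := by
      rw [ae_iff]; simpa using hnull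
    filter_upwards [hae] with y hy
    have hy' : 1 + ⟪v, y - x⟫ ≠ 0 := hy
    have hc : Continuous fun t : ℝ => 1 + ⟪v, y - x⟫ + t * ⟪w, y - x⟫ :=
      continuous_const.add (continuous_id.mul continuous_const)
    have hca := hc.continuousAt (x := (0:ℝ))
    rw [ContinuousAt] at hca
    simp only [zero_mul, add_zero] at hca
    rcases lt_or_gt_of_ne hy' with hneg | hpos
    · have hev : ∀ᶠ t in nhds (0:ℝ), 1 + ⟪v, y - x⟫ + t * ⟪w, y - x⟫ < 0 :=
        hca.eventually (eventually_lt_nhds hneg)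
      have hF0 : F' y = 0 := by
        rw [hF'def, Set.indicator_of_notMem]
        simp only [mem_setOf_eq, not_le]
        linarith
      rw [hF0]
      refine HasDerivAt.congr_of_eventuallyEq (hasDerivAt_const 0 (0:ℝ)) ?_
      filter_upwards [hev] with t ht
      show F t y = 0
      rw [hFdef]
      exact max_eq_right ht.le
    · have hev : ∀ᶠ t in nhds (0:ℝ), 0 < 1 + ⟪v, y - x⟫ + t * ⟪w, y - x⟫ :=
        hca.eventually (eventually_gt_nhds hpos)
      have hF0 : F' y = ⟪w, y - x⟫ := by
        rw [hF'def, Set.indicator_of_mem]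
        exact le_of_lt hpos
      rw [hF0]
      have hlin : HasDerivAt (fun t : ℝ => 1 + ⟪v, y - x⟫ + t * ⟪w, y - x⟫) ⟪w, y - x⟫ 0 :=
        (hasDerivAt_mul_const _).const_add _
      refine HasDerivAt.congr_of_eventuallyEq hlin ?_
      filter_upwards [hev] with t ht
      show F t y = _
      rw [hFdef]
      exact max_eq_left ht.le

/-- A Lipschitz estimate for `u ↦ ∫ max (c + ⟪u, y - x⟫) 0 dμ`. -/
theorem aux_lip {n : ℕ} (μ : Measure (EuclideanSpace ℝ (Fin n))) [IsFiniteMeasure μ]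
    (x : EuclideanSpace ℝ (Fin n)) (hIz : Integrable (fun y => y - x) μ)
    (c : ℝ) (u u' : EuclideanSpace ℝ (Fin n)) :
    |(∫ y, max (c + ⟪u, y - x⟫) 0 ∂μ) - ∫ y, max (c + ⟪u', y - x⟫) 0 ∂μ|
      ≤ ‖u - u'‖ * ∫ y, ‖y - x‖ ∂μ := by
  have hIn : Integrable (fun y => ‖y - x‖) μ := hIz.norm
  have hI1 : Integrable (fun y => max (c + ⟪u, y - x⟫) 0) μ :=
    ((integrable_const c).add (hIz.const_inner u)).pos_part
  have hI2 : Integrable (fun y => max (c + ⟪u', y - x⟫) 0) μ :=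
    ((integrable_const c).add (hIz.const_inner u')).pos_part
  rw [← integral_sub hI1 hI2]
  have hb : ∀ y : EuclideanSpace ℝ (Fin n),
      |max (c + ⟪u, y - x⟫) 0 - max (c + ⟪u', y - x⟫) 0| ≤ ‖u - u'‖ * ‖y - x‖ := by
    intro y
    have h1 : |max (c + ⟪u, y - x⟫) 0 - max (c + ⟪u', y - x⟫) 0|
        ≤ |(c + ⟪u, y - x⟫) - (c + ⟪u', y - x⟫)| := abs_max_sub_max_le_abs _ _ 0
    have h2 : (c + ⟪u, y - x⟫) - (c + ⟪u', y - x⟫) = ⟪u - u', y - x⟫ := by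
      rw [inner_sub_left]; ring
    rw [h2] at h1
    exact h1.trans (abs_real_inner_le_norm _ _)
  calc |∫ y, (max (c + ⟪u, y - x⟫) 0 - max (c + ⟪u', y - x⟫) 0) ∂μ|
      ≤ ∫ y, |max (c + ⟪u, y - x⟫) 0 - max (c + ⟪u', y - x⟫) 0| ∂μ := by
        simpa [Real.norm_eq_abs] using
          norm_integral_le_integral_norm (fun y => max (c + ⟪u, y - x⟫) 0 - max (c + ⟪u', y - x⟫) 0) (μ := μ)
    _ ≤ ∫ y, ‖u - u'‖ * ‖y - x‖ ∂μ := by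
        refine integral_mono (hI1.sub hI2).abs (hIn.const_mul _) fun y => hb y
    _ = ‖u - u'‖ * ∫ y, ‖y - x‖ ∂μ := integral_const_mul _ _

set_option maxHeartbeats 1000000 in
/-- Let `μ` be a finite absolutely continuous Borel measure on `ℝⁿ` with bounded
first moment. For every `x ≠ b_μ(ℝⁿ)` in the interior of the convex hull of the
support of `μ`, there is a halfspace `H` with `b_μ(H) = x` maximizing `μ` among
all Borel sets with barycenter `x`. -/
theorem exists_maximizing_halfspace (n : ℕ)
    (μ : Measure (EuclideanSpace ℝ (Fin n)))
    [IsFiniteMeasure μ] (hac : μ ≪ volume)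
    (hmom : Integrable (fun x => ‖x‖) μ)
    (x : EuclideanSpace ℝ (Fin n))
    (hx : x ∈ interior (convexHull ℝ (measSupport μ)))
    (hxb : x ≠ (μ univ).toReal⁻¹ • (∫ y, y ∂μ)) :
    ∃ (θ : EuclideanSpace ℝ (Fin n)) (c : ℝ), ‖θ‖ = 1 ∧
      (μ {y | ⟪y, θ⟫ ≤ c}).toReal⁻¹ • (∫ y in {y | ⟪y, θ⟫ ≤ c}, y ∂μ) = x ∧
      ∀ A : Set (EuclideanSpace ℝ (Fin n)), MeasurableSet A →
        (μ A).toReal⁻¹ • (∫ y in A, y ∂μ) = x → μ A ≤ μ {y | ⟪y, θ⟫ ≤ c} := by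
  classical
  rcases Nat.eq_zero_or_pos n with rfl | hn
  · have hsub : Subsingleton (EuclideanSpace ℝ (Fin 0)) := ⟨fun a b => by ext i; exact i.elim0⟩
    exact absurd (Subsingleton.elim _ _) hxb
  -- basic integrability facts
  have hI : Integrable (fun y : EuclideanSpace ℝ (Fin n) => y) μ :=
    (integrable_norm_iff aestronglyMeasurable_id).mp hmom
  have hIz : Integrable (fun y => y - x) μ := hI.sub (integrable_const x)
  have hIv : ∀ v : EuclideanSpace ℝ (Fin n), Integrable (fun y => ⟪v, y - x⟫) μ :=
    fun v => hIz.const_inner v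
  have hIn : Integrable (fun y => ‖y - x‖) μ := hIz.norm
  have hcont : ∀ u : EuclideanSpace ℝ (Fin n),
      Continuous fun y : EuclideanSpace ℝ (Fin n) => ⟪u, y - x⟫ :=
    fun u => continuous_const.inner (continuous_id.sub continuous_const)
  have hIG : ∀ v : EuclideanSpace ℝ (Fin n),
      Integrable (fun y => max (1 + ⟪v, y - x⟫) 0) μ :=
    fun v => ((integrable_const (1:ℝ)).add (hIv v)).pos_part
  have hIh : ∀ u : EuclideanSpace ℝ (Fin n), Integrable (fun y => max ⟪u, y - x⟫ 0) μ :=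
    fun u => (hIv u).pos_part
  -- positivity of the one-sided moment in every nonzero direction
  have hpos : ∀ u : EuclideanSpace ℝ (Fin n), u ≠ 0 → 0 < ∫ y, max ⟪u, y - x⟫ 0 ∂μ := by
    intro u hu
    rcases (integral_nonneg (f := fun y => max ⟪u, y - x⟫ 0) fun y => le_max_right _ _).lt_or_eq with hlt | heq
    · exact hlt
    exfalso
    have hae : ∀ᵐ y ∂μ, max ⟪u, y - x⟫ 0 = 0 := by
      have h := (integral_eq_zero_iff_of_nonneg (fun y => le_max_right _ _) (hIh u)).mp heq.symm
      filter_upwards [h] with y hy using hy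
    have hUnull : μ {y | 0 < ⟪u, y - x⟫} = 0 := by
      have h1 : μ {y | ¬ max ⟪u, y - x⟫ 0 = 0} = 0 := by
        rw [← ae_iff] at *
        exact hae
      refine measure_mono_null ?_ h1
      intro y hy
      have : (0:ℝ) < ⟪u, y - x⟫ := hy
      simp only [mem_setOf_eq, max_eq_left this.le]
      exact ne_of_gt this
    have hopen : IsOpen {y : EuclideanSpace ℝ (Fin n) | 0 < ⟪u, y - x⟫} :=
      isOpen_lt continuous_const (hcont u)
    have hsupp : measSupport μ ⊆ {y | ⟪u, y - x⟫ ≤ 0} := by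
      intro z hz
      by_contra hzc
      simp only [mem_setOf_eq, not_le] at hzc
      have := hz _ hopen hzc
      rw [hUnull] at this
      exact lt_irrefl 0 this
    have hconv : Convex ℝ {y : EuclideanSpace ℝ (Fin n) | ⟪u, y - x⟫ ≤ 0} := by
      have hset : {y : EuclideanSpace ℝ (Fin n) | ⟪u, y - x⟫ ≤ 0}
          = {y : EuclideanSpace ℝ (Fin n) | ⟪u, y⟫ ≤ ⟪u, x⟫} := by
        ext y
        simp only [mem_setOf_eq, inner_sub_right]
        constructor <;> intro <;> linarith
      rw [hset]
      exact convex_halfSpace_le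
        ⟨fun a b => inner_add_right u a b, fun c a => real_inner_smul_right u a c⟩ _
    have hhull : convexHull ℝ (measSupport μ) ⊆ {y | ⟪u, y - x⟫ ≤ 0} :=
      convexHull_min hsupp hconv
    obtain ⟨ε, hε, hball⟩ := Metric.mem_nhds_iff.mp (mem_interior_iff_mem_nhds.mp hx)
    have hune : (0:ℝ) < ‖u‖ := norm_pos_iff.mpr hu
    have hp : x + (ε / 2 / ‖u‖) • u ∈ Metric.ball x ε := by
      rw [Metric.mem_ball, dist_eq_norm]
      have : x + (ε / 2 / ‖u‖) • u - x = (ε / 2 / ‖u‖) • u := by abel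
      rw [this, norm_smul, Real.norm_eq_abs, abs_of_pos (by positivity)]
      rw [div_mul_cancel₀ _ (ne_of_gt hune)]
      linarith
    have hmem := hhull (hball hp)
    simp only [mem_setOf_eq, add_sub_cancel_left, real_inner_smul_right] at hmem
    have : 0 < ε / 2 / ‖u‖ * ⟪u, u⟫ := by
      have h7 : 0 < ⟪u, u⟫ := by rw [real_inner_self_eq_norm_sq]; exact pow_pos hune 2
      positivity
    linarith
  -- minimum of the direction functional on the unit sphere
  have hClip : ∀ (c : ℝ) (u u' : EuclideanSpace ℝ (Fin n)),
      |(∫ y, max (c + ⟪u, y - x⟫) 0 ∂μ) - ∫ y, max (c + ⟪u', y - x⟫) 0 ∂μ|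
        ≤ ‖u - u'‖ * ∫ y, ‖y - x‖ ∂μ := fun c u u' => aux_lip μ x hIz c u u'
  have hC0 : (0:ℝ) ≤ ∫ y, ‖y - x‖ ∂μ := integral_nonneg fun y => norm_nonneg _
  have hhcont : Continuous fun u : EuclideanSpace ℝ (Fin n) => ∫ y, max ⟪u, y - x⟫ 0 ∂μ := by
    refine LipschitzWith.continuous (K := (∫ y, ‖y - x‖ ∂μ).toNNReal) ?_
    refine LipschitzWith.of_dist_le_mul fun u u' => ?_
    rw [Real.dist_eq, dist_eq_norm, Real.coe_toNNReal _ hC0]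
    have h := hClip 0 u u'
    simp only [zero_add] at h
    calc |(∫ y, max ⟪u, y - x⟫ 0 ∂μ) - ∫ y, max ⟪u', y - x⟫ 0 ∂μ|
        ≤ ‖u - u'‖ * ∫ y, ‖y - x‖ ∂μ := h
      _ = (∫ y, ‖y - x‖ ∂μ) * ‖u - u'‖ := mul_comm _ _
  have hGcont : Continuous fun v : EuclideanSpace ℝ (Fin n) =>
      ∫ y, max (1 + ⟪v, y - x⟫) 0 ∂μ := by
    refine LipschitzWith.continuous (K := (∫ y, ‖y - x‖ ∂μ).toNNReal) ?_
    refine LipschitzWith.of_dist_le_mul fun u u' => ?_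
    rw [Real.dist_eq, dist_eq_norm, Real.coe_toNNReal _ hC0]
    calc |(∫ y, max (1 + ⟪u, y - x⟫) 0 ∂μ) - ∫ y, max (1 + ⟪u', y - x⟫) 0 ∂μ|
        ≤ ‖u - u'‖ * ∫ y, ‖y - x‖ ∂μ := hClip 1 u u'
      _ = (∫ y, ‖y - x‖ ∂μ) * ‖u - u'‖ := mul_comm _ _
  obtain ⟨u₀, hu₀s, hu₀min'⟩ := (isCompact_sphere (0 : EuclideanSpace ℝ (Fin n)) 1).exists_isMinOn
    ⟨EuclideanSpace.single ⟨0, hn⟩ (1:ℝ), by simp [EuclideanSpace.norm_single]⟩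
    hhcont.continuousOn
  have hu₀min := isMinOn_iff.mp hu₀min'
  have hu₀ne : u₀ ≠ 0 := by
    intro h
    rw [h] at hu₀s
    simp at hu₀s
  have hmpos : 0 < ∫ y, max ⟪u₀, y - x⟫ 0 ∂μ := hpos u₀ hu₀ne
  -- coercivity of G
  have hcoer : ∀ v : EuclideanSpace ℝ (Fin n), v ≠ 0 →
      ‖v‖ * ∫ y, max ⟪u₀, y - x⟫ 0 ∂μ ≤ ∫ y, max (1 + ⟪v, y - x⟫) 0 ∂μ := by
    intro v hv
    have hvn : (0:ℝ) < ‖v‖ := norm_pos_iff.mpr hv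
    have hu : ‖v‖⁻¹ • v ∈ Metric.sphere (0 : EuclideanSpace ℝ (Fin n)) 1 := by
      rw [mem_sphere_zero_iff_norm]
      exact norm_smul_inv_norm hv
    have h1 : (∫ y, max ⟪u₀, y - x⟫ 0 ∂μ) ≤ ∫ y, max ⟪‖v‖⁻¹ • v, y - x⟫ 0 ∂μ :=
      hu₀min _ hu
    have h2 : ‖v‖ * ∫ y, max ⟪‖v‖⁻¹ • v, y - x⟫ 0 ∂μ = ∫ y, max ⟪v, y - x⟫ 0 ∂μ := by
      rw [← integral_const_mul]
      congr 1
      funext y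
      rw [mul_max_of_nonneg _ _ (norm_nonneg v), mul_zero, real_inner_smul_left,
        ← mul_assoc, mul_inv_cancel₀ (ne_of_gt hvn), one_mul]
    have h3 : (∫ y, max ⟪v, y - x⟫ 0 ∂μ) ≤ ∫ y, max (1 + ⟪v, y - x⟫) 0 ∂μ := by
      refine integral_mono (hIh v) (hIG v) fun y => ?_
      exact max_le (le_max_of_le_left (by linarith)) (le_max_right _ _)
    calc ‖v‖ * ∫ y, max ⟪u₀, y - x⟫ 0 ∂μ
        ≤ ‖v‖ * ∫ y, max ⟪‖v‖⁻¹ • v, y - x⟫ 0 ∂μ :=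
          mul_le_mul_of_nonneg_left h1 (norm_nonneg v)
      _ = ∫ y, max ⟪v, y - x⟫ 0 ∂μ := h2
      _ ≤ _ := h3
  -- existence of a global minimizer of G
  have hG00 : (0:ℝ) ≤ ∫ y, max (1 + ⟪(0 : EuclideanSpace ℝ (Fin n)), y - x⟫) 0 ∂μ :=
    integral_nonneg fun y => le_max_right _ _
  have hR0 : 0 < ((∫ y, max (1 + ⟪(0 : EuclideanSpace ℝ (Fin n)), y - x⟫) 0 ∂μ) + 1)
      / ∫ y, max ⟪u₀, y - x⟫ 0 ∂μ := div_pos (by linarith) hmpos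
  obtain ⟨v', hvball, hvmin'⟩ := (isCompact_closedBall (0 : EuclideanSpace ℝ (Fin n))
      (((∫ y, max (1 + ⟪(0 : EuclideanSpace ℝ (Fin n)), y - x⟫) 0 ∂μ) + 1)
        / ∫ y, max ⟪u₀, y - x⟫ 0 ∂μ)).exists_isMinOn
    ⟨0, by rw [Metric.mem_closedBall, dist_self]; exact hR0.le⟩ hGcont.continuousOn
  have hvmin := isMinOn_iff.mp hvmin'
  have hglobal : ∀ v : EuclideanSpace ℝ (Fin n),
      (∫ y, max (1 + ⟪v', y - x⟫) 0 ∂μ) ≤ ∫ y, max (1 + ⟪v, y - x⟫) 0 ∂μ := by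
    intro v
    by_cases hv : v ∈ Metric.closedBall (0 : EuclideanSpace ℝ (Fin n))
      (((∫ y, max (1 + ⟪(0 : EuclideanSpace ℝ (Fin n)), y - x⟫) 0 ∂μ) + 1)
        / ∫ y, max ⟪u₀, y - x⟫ 0 ∂μ)
    · exact hvmin v hv
    · have hRv : ((∫ y, max (1 + ⟪(0 : EuclideanSpace ℝ (Fin n)), y - x⟫) 0 ∂μ) + 1)
          / (∫ y, max ⟪u₀, y - x⟫ 0 ∂μ) < ‖v‖ := by
        rw [Metric.mem_closedBall, dist_zero_right, not_le] at hv
        exact hv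
      have hvne : v ≠ 0 := by
        intro h
        rw [h, norm_zero] at hRv
        exact absurd hRv (not_lt.mpr hR0.le)
      have hchain : (∫ y, max (1 + ⟪v', y - x⟫) 0 ∂μ)
          ≤ ∫ y, max (1 + ⟪(0 : EuclideanSpace ℝ (Fin n)), y - x⟫) 0 ∂μ :=
        hvmin 0 (by rw [Metric.mem_closedBall, dist_self]; exact hR0.le)
      have h1 := hcoer v hvne
      have h2 : (∫ y, max ⟪u₀, y - x⟫ 0 ∂μ)
            * (((∫ y, max (1 + ⟪(0 : EuclideanSpace ℝ (Fin n)), y - x⟫) 0 ∂μ) + 1)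
              / ∫ y, max ⟪u₀, y - x⟫ 0 ∂μ)
          = (∫ y, max (1 + ⟪(0 : EuclideanSpace ℝ (Fin n)), y - x⟫) 0 ∂μ) + 1 := by
        rw [mul_comm]
        exact div_mul_cancel₀ _ (ne_of_gt hmpos)
      nlinarith [mul_pos hmpos (sub_pos.mpr hRv)]
  -- the total mass is positive
  have hμuniv : (μ univ).toReal ≠ 0 := by
    intro hh
    have h1 : μ univ = 0 := by
      rcases (ENNReal.toReal_eq_zero_iff _).mp hh with h | h
      · exact h
      · exact absurd h (measure_ne_top μ univ)
    have h2 : μ = 0 := Measure.measure_univ_eq_zero.mp h1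
    rw [h2] at hmpos
    simp at hmpos
  -- the minimizer is nonzero (else the global barycenter would be x)
  have hvne : v' ≠ 0 := by
    intro h0
    rw [h0] at hglobal
    have hnull0 : μ {y : EuclideanSpace ℝ (Fin n) | 1 + ⟪(0 : EuclideanSpace ℝ (Fin n)), y - x⟫ = 0} = 0 := by
      have he : {y : EuclideanSpace ℝ (Fin n) | 1 + ⟪(0 : EuclideanSpace ℝ (Fin n)), y - x⟫ = 0} = ∅ := by
        ext y
        simp
      rw [he]
      exact measure_empty
    have foc0 : ∀ w : EuclideanSpace ℝ (Fin n),
        ∫ y in {y : EuclideanSpace ℝ (Fin n) | 0 ≤ 1 + ⟪(0 : EuclideanSpace ℝ (Fin n)), y - x⟫},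
          ⟪w, y - x⟫ ∂μ = 0 := by
      intro w
      have hd := aux_deriv μ x 0 w hIz hnull0
      have hloc : IsLocalMin
          (fun t : ℝ => ∫ y, max (1 + ⟪(0 : EuclideanSpace ℝ (Fin n)) + t • w, y - x⟫) 0 ∂μ) 0 := by
        refine Filter.Eventually.of_forall fun t => ?_
        simpa using hglobal ((0 : EuclideanSpace ℝ (Fin n)) + t • w)
      exact hloc.hasDerivAt_eq_zero hd
    have huniv : {y : EuclideanSpace ℝ (Fin n) | 0 ≤ 1 + ⟪(0 : EuclideanSpace ℝ (Fin n)), y - x⟫}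
        = univ := by
      ext y
      simp
    have hz : ∫ y, (y - x) ∂μ = 0 := by
      refine integral_eq_zero_of_forall_integral_inner_eq_zero (𝕜 := ℝ) _ hIz fun w => ?_
      have h := foc0 w
      rwa [huniv, Measure.restrict_univ] at h
    have h5 : ∫ y, (y - x) ∂μ = (∫ y, y ∂μ) - (μ univ).toReal • x := by
      rw [integral_sub hI (integrable_const x), integral_const, measureReal_def]
    rw [h5] at hz
    have h4 : ∫ y, y ∂μ = (μ univ).toReal • x := sub_eq_zero.mp hz
    have h6 : (μ univ).toReal⁻¹ • ∫ y, y ∂μ = x := by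
      rw [h4, inv_smul_smul₀ hμuniv]
    exact hxb h6.symm
  -- the boundary hyperplane of the halfspace is null
  have hnull : μ {y : EuclideanSpace ℝ (Fin n) | 1 + ⟪v', y - x⟫ = 0} = 0 := by
    have hset : {y : EuclideanSpace ℝ (Fin n) | 1 + ⟪v', y - x⟫ = 0}
        = {y : EuclideanSpace ℝ (Fin n) | ⟪v', y⟫ = ⟪v', x⟫ - 1} := by
      ext y
      simp only [mem_setOf_eq, inner_sub_right]
      constructor <;> intro <;> linarith
    rw [hset]
    exact hac (aux_hyperplane v' hvne _)
  -- first-order condition: the halfspace has barycenter x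
  have foc : ∀ w : EuclideanSpace ℝ (Fin n),
      ∫ y in {y : EuclideanSpace ℝ (Fin n) | 0 ≤ 1 + ⟪v', y - x⟫}, ⟪w, y - x⟫ ∂μ = 0 := by
    intro w
    have hd := aux_deriv μ x v' w hIz hnull
    have hloc : IsLocalMin (fun t : ℝ => ∫ y, max (1 + ⟪v' + t • w, y - x⟫) 0 ∂μ) 0 := by
      refine Filter.Eventually.of_forall fun t => ?_
      simpa using hglobal (v' + t • w)
    exact hloc.hasDerivAt_eq_zero hd
  have hHmeas : MeasurableSet {y : EuclideanSpace ℝ (Fin n) | 0 ≤ 1 + ⟪v', y - x⟫} :=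
    measurableSet_le measurable_const (continuous_const.add (hcont v')).measurable
  have hHz : ∫ y in {y : EuclideanSpace ℝ (Fin n) | 0 ≤ 1 + ⟪v', y - x⟫}, (y - x) ∂μ = 0 :=
    integral_eq_zero_of_forall_integral_inner_eq_zero (𝕜 := ℝ) _ hIz.restrict fun w => foc w
  -- the measure of the halfspace equals the minimum value of G
  have hHval : (μ {y : EuclideanSpace ℝ (Fin n) | 0 ≤ 1 + ⟪v', y - x⟫}).toReal
      = ∫ y, max (1 + ⟪v', y - x⟫) 0 ∂μ := by
    have hind : (fun y : EuclideanSpace ℝ (Fin n) => max (1 + ⟪v', y - x⟫) 0)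
        = Set.indicator {y : EuclideanSpace ℝ (Fin n) | 0 ≤ 1 + ⟪v', y - x⟫}
          (fun y => 1 + ⟪v', y - x⟫) := by
      funext y
      by_cases hy : 0 ≤ 1 + ⟪v', y - x⟫
      · exact (max_eq_left hy).trans (Set.indicator_of_mem
          (show y ∈ {y : EuclideanSpace ℝ (Fin n) | 0 ≤ 1 + ⟪v', y - x⟫} from hy) (fun y => 1 + ⟪v', y - x⟫)).symm
      · exact (max_eq_right (le_of_not_ge hy)).trans (Set.indicator_of_notMem
          (show y ∉ {y : EuclideanSpace ℝ (Fin n) | 0 ≤ 1 + ⟪v', y - x⟫} from hy) _).symm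
    rw [hind, integral_indicator hHmeas,
      integral_add ((integrable_const (1:ℝ)).restrict) ((hIv v').restrict),
      foc v', add_zero, setIntegral_const, smul_eq_mul, mul_one, measureReal_def]
  have hGpos : 0 < ∫ y, max (1 + ⟪v', y - x⟫) 0 ∂μ :=
    lt_of_lt_of_le (mul_pos (norm_pos_iff.mpr hvne) hmpos) (hcoer v' hvne)
  have hμH : 0 < (μ {y : EuclideanSpace ℝ (Fin n) | 0 ≤ 1 + ⟪v', y - x⟫}).toReal := by
    rw [hHval]
    exact hGpos
  have hHy : ∫ y in {y : EuclideanSpace ℝ (Fin n) | 0 ≤ 1 + ⟪v', y - x⟫}, y ∂μ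
      = (μ {y : EuclideanSpace ℝ (Fin n) | 0 ≤ 1 + ⟪v', y - x⟫}).toReal • x := by
    have h5 : ∫ y in {y : EuclideanSpace ℝ (Fin n) | 0 ≤ 1 + ⟪v', y - x⟫}, (y - x) ∂μ
        = (∫ y in {y : EuclideanSpace ℝ (Fin n) | 0 ≤ 1 + ⟪v', y - x⟫}, y ∂μ)
          - (μ {y : EuclideanSpace ℝ (Fin n) | 0 ≤ 1 + ⟪v', y - x⟫}).toReal • x := by
      rw [integral_sub hI.restrict ((integrable_const x).restrict), setIntegral_const, measureReal_def]
    rw [h5] at hHz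
    exact sub_eq_zero.mp hHz
  -- construct the halfspace
  have hvnorm : (0:ℝ) < ‖v'‖ := norm_pos_iff.mpr hvne
  have hsetθ : {y : EuclideanSpace ℝ (Fin n) | ⟪y, -(‖v'‖⁻¹ • v')⟫ ≤ ‖v'‖⁻¹ * (1 - ⟪v', x⟫)}
      = {y : EuclideanSpace ℝ (Fin n) | 0 ≤ 1 + ⟪v', y - x⟫} := by
    ext y
    simp only [mem_setOf_eq, inner_neg_right, real_inner_smul_right, inner_sub_right]
    rw [← mul_le_mul_iff_right₀ hvnorm, mul_neg, mul_inv_cancel_left₀ (ne_of_gt hvnorm),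
      mul_inv_cancel_left₀ (ne_of_gt hvnorm), real_inner_comm y v']
    constructor <;> intro <;> linarith
  refine ⟨-(‖v'‖⁻¹ • v'), ‖v'‖⁻¹ * (1 - ⟪v', x⟫), ?_, ?_, ?_⟩
  · rw [norm_neg]
    exact norm_smul_inv_norm hvne
  · rw [hsetθ, hHy, inv_smul_smul₀ (ne_of_gt hμH)]
  · intro A hAmeas hAbar
    rw [hsetθ]
    by_cases hA0 : μ A = 0
    · rw [hA0]
      exact zero_le
    · have hAne : (μ A).toReal ≠ 0 :=
        ENNReal.toReal_ne_zero.mpr ⟨hA0, measure_ne_top μ A⟩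
      have hAy : ∫ y in A, y ∂μ = (μ A).toReal • x := by
        rw [← hAbar, smul_inv_smul₀ hAne]
      have h5 : ∫ y in A, (y - x) ∂μ = 0 := by
        rw [integral_sub hI.restrict ((integrable_const x).restrict), setIntegral_const, measureReal_def, hAy,
          sub_self]
      have hAv : ∫ y in A, ⟪v', y - x⟫ ∂μ = 0 := by
        rw [integral_inner hIz.restrict, h5, inner_zero_right]
      have h1 : (μ A).toReal = ∫ y in A, (1 + ⟪v', y - x⟫) ∂μ := by
        rw [integral_add ((integrable_const (1:ℝ)).restrict) ((hIv v').restrict), hAv, add_zero,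
          setIntegral_const, smul_eq_mul, mul_one, measureReal_def]
      have h2 : (∫ y in A, (1 + ⟪v', y - x⟫) ∂μ) ≤ ∫ y in A, max (1 + ⟪v', y - x⟫) 0 ∂μ := by
        refine integral_mono (((integrable_const (1:ℝ)).restrict).add ((hIv v').restrict))
          ((hIG v').restrict) fun y => le_max_left _ _
      have h3 : (∫ y in A, max (1 + ⟪v', y - x⟫) 0 ∂μ) ≤ ∫ y, max (1 + ⟪v', y - x⟫) 0 ∂μ :=
        setIntegral_le_integral (hIG v') (Filter.Eventually.of_forall fun y => le_max_right _ _)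
      have h6 : (μ A).toReal ≤ (μ {y : EuclideanSpace ℝ (Fin n) | 0 ≤ 1 + ⟪v', y - x⟫}).toReal := by
        rw [h1, hHval]
        exact le_trans h2 h3
      exact (ENNReal.toReal_le_toReal (measure_ne_top μ A) (measure_ne_top μ _)).mp h6
end

section
/- Let K ⊆ [-1,1]^n be a measurable set of positive volume with barycenter b(K) = (x_1,...,x_n). Then vol(K) < e^n · ∏_{i=1}^n (1 - |x_i|). -/
open MeasureTheory Set

/-- The function `u ↦ e^u` on `(-∞,0]`, extended by `0`. -/
noncomputable def isoG0 : ℝ → ℝ := Set.indicator (Iic (0:ℝ)) Real.exp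

lemma isoG0_nonneg (u : ℝ) : 0 ≤ isoG0 u :=
  Set.indicator_nonneg (fun _ _ => (Real.exp_pos _).le) u

lemma isoG0_integrable : Integrable isoG0 :=
  (integrableOn_exp_Iic 0).integrable_indicator measurableSet_Iic

lemma isoG0_integral : ∫ u, isoG0 u = 1 := by
  rw [show (fun u => isoG0 u) = Set.indicator (Iic (0:ℝ)) Real.exp from rfl,
    integral_indicator measurableSet_Iic]
  exact integral_exp_Iic_zero

lemma isoG0_of_nonpos {u : ℝ} (hu : u ≤ 0) : isoG0 u = Real.exp u :=
  Set.indicator_of_mem (mem_Iic.2 hu) _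

lemma iso_aux {s a : ℝ} (hs : s = 1 ∨ s = -1) (ha : 0 < a) :
    Integrable (fun t : ℝ => isoG0 ((s * t - 1) / a)) ∧
      (∫ t : ℝ, isoG0 ((s * t - 1) / a)) = a := by
  have hsne : s ≠ 0 := by rcases hs with h | h <;> simp [h]
  have hs' : |s| = 1 := by rcases hs with h | h <;> simp [h]
  have hc : s / a ≠ 0 := div_ne_zero hsne ha.ne'
  have key : ∀ t : ℝ, (s * t - 1) / a = (s / a) * t + (-(1 / a)) := fun t => by ring
  have hg1 : Integrable (fun u : ℝ => isoG0 (u + (-(1 / a)))) :=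
    isoG0_integrable.comp_add_right _
  refine ⟨?_, ?_⟩
  · simpa only [key] using hg1.comp_mul_left' hc
  · have h2 := MeasureTheory.Measure.integral_comp_mul_left
      (fun u : ℝ => isoG0 (u + (-(1 / a)))) (s / a)
    have h3 : (∫ u : ℝ, isoG0 (u + (-(1 / a)))) = ∫ u : ℝ, isoG0 u :=
      integral_add_right_eq_self _ _
    simp only [key]
    rw [h2, h3, isoG0_integral, smul_eq_mul, mul_one, abs_inv, abs_div, hs',
      abs_of_pos ha]
    simp

/-- For a measurable set `K ⊆ [-1,1]^n` of positive volume with barycenter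
`(x₁,…,xₙ)`, one has `vol(K) < eⁿ ∏ᵢ (1 - |xᵢ|)`. -/
theorem isobarycentric_general_bound (n : ℕ) (hn : 0 < n)
    (K : Set (Fin n → ℝ)) (hK : MeasurableSet K)
    (hKsub : K ⊆ Icc (fun _ => -1 : Fin n → ℝ) (fun _ => 1))
    (hKpos : 0 < volume K) (x : Fin n → ℝ)
    (hbar : (volume K).toReal⁻¹ • (∫ y in K, y) = x) :
    (volume K).toReal < Real.exp 1 ^ n * ∏ i, (1 - |x i|) := by
  classical
  have hKlt : volume K < ⊤ := (measure_mono hKsub).trans_lt isCompact_Icc.measure_lt_top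
  set V : ℝ := (volume K).toReal with hVdef
  have hVpos : 0 < V := ENNReal.toReal_pos hKpos.ne' hKlt.ne
  have hVne : V ≠ 0 := hVpos.ne'
  -- signs
  set s : Fin n → ℝ := fun i => if 0 ≤ x i then 1 else -1 with hsdef
  have hs1 : ∀ i, s i = 1 ∨ s i = -1 := by
    intro i; by_cases h : 0 ≤ x i <;> simp [hsdef, h]
  have hsabs : ∀ i, s i * x i = |x i| := by
    intro i; by_cases h : 0 ≤ x i
    · simp [hsdef, h, abs_of_nonneg h]
    · push_neg at h; simp [hsdef, not_le.2 h, abs_of_neg h]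
  have hsy : ∀ y ∈ K, ∀ i, s i * y i ≤ 1 := by
    intro y hy i
    have h1 : -1 ≤ y i := (hKsub hy).1 i
    have h2 : y i ≤ 1 := (hKsub hy).2 i
    rcases hs1 i with h | h <;> rw [h] <;> linarith
  -- coordinate integrals
  have hIntId : IntegrableOn (fun y : Fin n → ℝ => y) K volume :=
    (continuous_id.continuousOn.integrableOn_compact isCompact_Icc).mono_set hKsub
  have hIntCoord : ∀ i, IntegrableOn (fun y : Fin n → ℝ => y i) K volume := fun i =>
    ((continuous_apply i).continuousOn.integrableOn_compact isCompact_Icc).mono_set hKsub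
  have hbar' : (∫ y in K, y) = V • x := by
    rw [← hbar, smul_inv_smul₀ hVne]
  have hcoord : ∀ i, (∫ y in K, y i) = V * x i := by
    intro i
    have := (ContinuousLinearMap.proj (R := ℝ) (φ := fun _ : Fin n => ℝ) i).integral_comp_comm
      hIntId
    simp only [ContinuousLinearMap.proj_apply] at this
    rw [this, hbar']
    simp
  -- the coefficients a i
  set a : Fin n → ℝ := fun i => 1 - |x i| with hadef
  have hIntf : ∀ i, IntegrableOn (fun y : Fin n → ℝ => 1 - s i * y i) K volume := by
    intro i
    exact (integrableOn_const hKlt.ne).sub ((hIntCoord i).const_mul _)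
  have hfint : ∀ i, (∫ y in K, (1 - s i * y i)) = V * a i := by
    intro i
    rw [integral_sub (integrableOn_const (C := (1:ℝ)) hKlt.ne) ((hIntCoord i).const_mul _),
      integral_const_mul, hcoord, setIntegral_const]
    simp only [smul_eq_mul, mul_one, hadef, measureReal_def, ← hVdef]
    rw [show s i * (V * x i) = V * (s i * x i) by ring, hsabs]
    ring
  have hapos : ∀ i, 0 < a i := by
    intro i
    have hnn : 0 ≤ V * a i := by
      rw [← hfint i]
      refine setIntegral_nonneg hK fun y hy => ?_
      have := hsy y hy i; linarith
    have hann : 0 ≤ a i := nonneg_of_mul_nonneg_right hnn hVpos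
    rcases lt_or_eq_of_le hann with h | h
    · exact h
    exfalso
    -- a i = 0 : then 1 - s i * y i = 0 a.e. on K, forcing K into a null hyperplane
    have hzero : (∫ y in K, (1 - s i * y i)) = 0 := by rw [hfint i, ← h, mul_zero]
    have hnonneg : 0 ≤ᵐ[volume.restrict K] fun y : Fin n → ℝ => 1 - s i * y i := by
      refine (ae_restrict_iff' hK).2 (Filter.Eventually.of_forall fun y hy => ?_)
      have := hsy y hy i
      simp only [Pi.zero_apply]
      linarith
    have hae := (integral_eq_zero_iff_of_nonneg_ae hnonneg (hIntf i)).1 hzero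
    have hmeas : MeasurableSet {y : Fin n → ℝ | ¬ (1 - s i * y i = 0)} := by
      have : Measurable fun y : Fin n → ℝ => 1 - s i * y i :=
        measurable_const.sub ((measurable_pi_apply i).const_mul _)
      exact (this (measurableSet_singleton 0)).compl
    have hnull : volume ({y : Fin n → ℝ | ¬ (1 - s i * y i = 0)} ∩ K) = 0 := by
      have := Filter.eventuallyEq_iff_exists_mem.1 hae
      have h2 : (volume.restrict K) {y : Fin n → ℝ | ¬ (1 - s i * y i = 0)} = 0 := by
        have h3 : ∀ᵐ y ∂(volume.restrict K), 1 - s i * y i = 0 := hae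
        exact h3
      rwa [Measure.restrict_apply hmeas] at h2
    have hhyp : volume {y : Fin n → ℝ | y i = s i} = 0 := by
      rw [volume_pi]
      exact MeasureTheory.Measure.pi_hyperplane _ i _
    have hsub2 : K ⊆ ({y : Fin n → ℝ | ¬ (1 - s i * y i = 0)} ∩ K) ∪
        {y : Fin n → ℝ | y i = s i} := by
      intro y hy
      by_cases hcase : 1 - s i * y i = 0
      · right
        have hss : s i * s i = 1 := by rcases hs1 i with h' | h' <;> rw [h'] <;> norm_num
        have : s i * y i = 1 := by linarith
        have : s i * (s i * y i) = s i * 1 := by rw [this]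
        simpa [← mul_assoc, hss] using this
      · exact Or.inl ⟨hcase, hy⟩
    have : volume K = 0 := by
      refine le_antisymm ?_ zero_le
      calc volume K ≤ volume (({y : Fin n → ℝ | ¬ (1 - s i * y i = 0)} ∩ K) ∪
          {y : Fin n → ℝ | y i = s i}) := measure_mono hsub2
        _ ≤ volume ({y : Fin n → ℝ | ¬ (1 - s i * y i = 0)} ∩ K) +
            volume {y : Fin n → ℝ | y i = s i} := measure_union_le _ _
        _ = 0 := by rw [hnull, hhyp, add_zero]
    exact hKpos.ne' this
  -- the product function F
  set h : Fin n → ℝ → ℝ := fun i t => isoG0 ((s i * t - 1) / a i) with hhdef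
  have hInth : ∀ i, Integrable (h i) := fun i => (iso_aux (hs1 i) (hapos i)).1
  have hIntegralh : ∀ i, (∫ t, h i t) = a i := fun i => (iso_aux (hs1 i) (hapos i)).2
  set F : (Fin n → ℝ) → ℝ := fun y => ∏ i, h i (y i) with hFdef
  have hFint : Integrable F := Integrable.fintype_prod hInth
  have hFintegral : (∫ y, F y) = ∏ i, a i := by
    rw [hFdef]
    beta_reduce; rw [volume_pi, MeasureTheory.integral_fintype_prod_eq_prod (f := h)]
    exact Finset.prod_congr rfl fun i _ => hIntegralh i
  have hFnonneg : ∀ y, 0 ≤ F y := fun y =>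
    Finset.prod_nonneg fun i _ => isoG0_nonneg _
  -- F = exp(S) on K
  set S : (Fin n → ℝ) → ℝ := fun y => ∑ i, (s i * y i - 1) / a i with hSdef
  have hFK : ∀ y ∈ K, F y = Real.exp (S y) := by
    intro y hy
    rw [hSdef, Real.exp_sum, hFdef]
    refine Finset.prod_congr rfl fun i _ => ?_
    rw [hhdef]
    exact isoG0_of_nonpos (div_nonpos_of_nonpos_of_nonneg
      (by have := hsy y hy i; linarith) (hapos i).le)
  -- S is integrable on K with integral -(n V)
  have hIntS : IntegrableOn S K volume := by
    refine integrable_finset_sum _ fun i _ => ?_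
    exact (((hIntCoord i).const_mul (s i)).sub (integrableOn_const hKlt.ne)).div_const _
  have hSval : (∫ y in K, S y) = -((n : ℝ) * V) := by
    have hterm : ∀ i : Fin n, IntegrableOn (fun y : Fin n → ℝ => (s i * y i - 1) / a i) K volume :=
      fun i => (((hIntCoord i).const_mul (s i)).sub
        (integrableOn_const hKlt.ne)).div_const _
    have hsum := integral_finset_sum (μ := volume.restrict K) Finset.univ
      (f := fun (i : Fin n) (y : Fin n → ℝ) => (s i * y i - 1) / a i) (fun i _ => hterm i)
    rw [hSdef, hsum]
    have : ∀ i ∈ Finset.univ, (∫ y in K, (s i * y i - 1) / a i) = -V := by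
      intro i _
      rw [integral_div, integral_sub ((hIntCoord i).const_mul (s i))
        (integrableOn_const hKlt.ne), integral_const_mul, hcoord, setIntegral_const]
      simp only [smul_eq_mul, mul_one, measureReal_def, ← hVdef]
      rw [show s i * (V * x i) = V * (s i * x i) by ring, hsabs]
      have : V * |x i| - V = -V * a i := by rw [hadef]; ring
      rw [this, mul_div_assoc, div_self (hapos i).ne', mul_one]
    rw [Finset.sum_congr rfl this]
    simp [mul_comm]
  -- lower bound : exp(-n) V ≤ ∫_K F
  have hlow : Real.exp (-(n : ℝ)) * V ≤ ∫ y in K, F y := by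
    have hle : ∀ y ∈ K, Real.exp (-(n : ℝ)) * (((n : ℝ) + 1) + S y) ≤ F y := by
      intro y hy
      rw [hFK y hy]
      have h1 : S y + (n : ℝ) + 1 ≤ Real.exp (S y + n) := Real.add_one_le_exp _
      have h2 : Real.exp (-(n : ℝ)) * Real.exp (S y + n) = Real.exp (S y) := by
        rw [← Real.exp_add]; ring_nf
      calc Real.exp (-(n : ℝ)) * (((n : ℝ) + 1) + S y)
          ≤ Real.exp (-(n : ℝ)) * Real.exp (S y + n) := by
            refine mul_le_mul_of_nonneg_left ?_ (Real.exp_pos _).le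
            linarith
        _ = Real.exp (S y) := h2
    have hgint : IntegrableOn (fun y => Real.exp (-(n : ℝ)) * (((n : ℝ) + 1) + S y)) K volume :=
      ((integrableOn_const hKlt.ne).add hIntS).const_mul _
    have := setIntegral_mono_on hgint (hFint.integrableOn) hK hle
    have heq : (∫ y in K, Real.exp (-(n : ℝ)) * (((n : ℝ) + 1) + S y))
        = Real.exp (-(n : ℝ)) * V := by
      rw [integral_const_mul, integral_add (integrableOn_const (C := (n : ℝ) + 1) hKlt.ne) hIntS,
        setIntegral_const, hSval]
      simp only [smul_eq_mul, measureReal_def, ← hVdef]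
      ring
    linarith [heq ▸ this]
  -- strict upper bound : ∫_K F < ∏ a i, via a box disjoint from the cube
  set l : Fin n → ℝ := fun i => if 0 ≤ x i then -3 else 2 with hldef
  set B : Set (Fin n → ℝ) := Set.pi univ fun i => Icc (l i) (l i + 1) with hBdef
  have hBmeas : MeasurableSet B := MeasurableSet.univ_pi fun i => measurableSet_Icc
  have hBvol : volume B = 1 := by
    rw [hBdef, volume_pi_pi]
    simp [Real.volume_Icc]
  have hBsy : ∀ y ∈ B, ∀ i, -3 ≤ s i * y i ∧ s i * y i ≤ -2 := by
    intro y hy i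
    have hyi := hy i (mem_univ i)
    simp only [mem_Icc] at hyi
    by_cases hxi : 0 ≤ x i
    · have hs' : s i = 1 := by simp [hsdef, hxi]
      have hl' : l i = -3 := by simp [hldef, hxi]
      rw [hl'] at hyi
      rw [hs']
      constructor <;> linarith [hyi.1, hyi.2]
    · have hs' : s i = -1 := by simp [hsdef, hxi]
      have hl' : l i = 2 := by simp [hldef, hxi]
      rw [hl'] at hyi
      rw [hs']
      constructor <;> linarith [hyi.1, hyi.2]
  have hBK : B ⊆ Kᶜ := by
    intro y hy hyK
    have i0 : Fin n := ⟨0, hn⟩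
    have h1 := (hBsy y hy i0).2
    have h2 : -1 ≤ s i0 * y i0 := by
      have ha := (hKsub hyK).1 i0
      have hb := (hKsub hyK).2 i0
      rcases hs1 i0 with h | h <;> rw [h] <;> simp at ha hb ⊢ <;> linarith
    linarith
  set c : ℝ := ∏ i, Real.exp (-4 / a i) with hcdef
  have hcpos : 0 < c := Finset.prod_pos fun i _ => Real.exp_pos _
  have hFB : ∀ y ∈ B, c ≤ F y := by
    intro y hy
    refine Finset.prod_le_prod (fun i _ => (Real.exp_pos _).le) fun i _ => ?_
    have h1 := hBsy y hy i
    show Real.exp (-4 / a i) ≤ isoG0 ((s i * y i - 1) / a i)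
    rw [isoG0_of_nonpos (div_nonpos_of_nonpos_of_nonneg (by linarith [h1.2]) (hapos i).le)]
    refine Real.exp_le_exp.2 ?_
    exact (div_le_div_iff_of_pos_right (hapos i)).2 (by linarith [h1.1])
  have hBbound : c ≤ ∫ y in B, F y := by
    have := setIntegral_ge_of_const_le hBmeas
      (by rw [hBvol]; exact ENNReal.one_ne_top) hFB hFint.integrableOn
    rw [measureReal_def, hBvol] at this
    simpa using this
  have hBle : (∫ y in B, F y) ≤ ∫ y in Kᶜ, F y :=
    setIntegral_mono_set hFint.integrableOn
      (Filter.Eventually.of_forall fun y => hFnonneg y)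
      (HasSubset.Subset.eventuallyLE hBK)
  have hsplit : (∫ y in K, F y) + (∫ y in Kᶜ, F y) = ∏ i, a i := by
    rw [integral_add_compl hK hFint, hFintegral]
  have hKF : (∫ y in K, F y) < ∏ i, a i := by linarith
  have hfinal : Real.exp (-(n : ℝ)) * V < ∏ i, a i := lt_of_le_of_lt hlow hKF
  have hstep : V < Real.exp (n : ℝ) * ∏ i, a i := by
    have h := mul_lt_mul_of_pos_left hfinal (Real.exp_pos (n : ℝ))
    rw [← mul_assoc, ← Real.exp_add] at h
    simpa using h
  have hexp : Real.exp 1 ^ n = Real.exp (n : ℝ) := by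
    rw [← Real.exp_nat_mul, mul_one]
  rw [hexp]
  have : (∏ i, (1 - |x i|)) = ∏ i, a i := by simp [hadef]
  rw [this]
  exact hstep
end
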